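/- Let q be a prime power not divisible by 3. Then there exists a nonzero element α of F_{q^3} with Tr_{F_{q^3}/F_q}(α) = 0 such that {1, α, α^q} is a basis of F_{q^3} over F_q. -/

import Mathlib

open Polynomial

lemma aux_ncard_root_le {E : Type*} [Field E] [Fintype E] (f : Polynomial E) (hf : f ≠ 0)
    (s : Set E) (h : ∀ x ∈ s, f.IsRoot x) : s.ncard ≤ f.natDegree := by
  classical
  have hsub : s ⊆ ↑f.roots.toFinset := by
    intro x hx
    simp only [Finset.coe_sort_coe, Multiset.mem_toFinset, Finset.mem_coe, mem_roots hf]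
    exact h x hx
  calc s.ncard ≤ (↑f.roots.toFinset : Set E).ncard :=
        Set.ncard_le_ncard hsub (Set.toFinite _)
    _ = f.roots.toFinset.card := Set.ncard_coe_finset _
    _ ≤ Multiset.card f.roots := Multiset.toFinset_card_le _
    _ ≤ f.natDegree := f.card_roots'

theorem stmt_1 (q : ℕ) (hq : IsPrimePow q) (h3 : ¬ (3 ∣ q))
    (F E : Type*) [Field F] [Fintype F] [Field E] [Fintype E] [Algebra F E]
    (hF : Fintype.card F = q) (hE : Fintype.card E = q ^ 3) :
    ∃ α : E, α ≠ 0 ∧ α + α ^ q + α ^ q ^ 2 = 0 ∧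
      ∃ b : Module.Basis (Fin 3) F E, b 0 = 1 ∧ b 1 = α ∧ b 2 = α ^ q := by
  classical
  obtain ⟨p, k, pp', hk, hqpk⟩ := hq
  have pp : p.Prime := pp'.nat_prime
  have hq2 : 2 ≤ q := by
    rw [← hqpk]
    calc 2 ≤ p := pp.two_le
      _ = p ^ 1 := (pow_one p).symm
      _ ≤ p ^ k := Nat.pow_le_pow_right (by exact pp.one_lt.le.trans (le_refl p)) hk
  have hq1 : 1 ≤ q := by omega
  -- characteristic of E is p
  have hpe : ringChar E = p := by
    obtain ⟨n, hnp, hcard⟩ := FiniteField.card E (ringChar E)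
    have hdvd : ringChar E ∣ q ^ 3 := by
      rw [← hE, hcard]
      exact dvd_pow_self _ (by exact_mod_cast n.ne_zero)
    have hdvd2 : ringChar E ∣ p ^ (k * 3) := by
      rwa [pow_mul, hqpk]
    have : ringChar E ∣ p := hnp.dvd_of_dvd_pow hdvd2
    exact (Nat.prime_dvd_prime_iff_eq hnp pp).mp this
  haveI : Fact p.Prime := ⟨pp⟩
  haveI hcharE : CharP E p := hpe ▸ ringChar.charP E
  set A := algebraMap F E with hA
  -- Frobenius facts
  have hadd : ∀ x y : E, (x + y) ^ q = x ^ q + y ^ q := by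
    intro x y; rw [← hqpk]; exact add_pow_char_pow x y p k
  have hmapF : ∀ c : F, (A c) ^ q = A c := by
    intro c
    rw [← map_pow]
    congr 1
    rw [← hF]; exact FiniteField.pow_card c
  have hcube : ∀ x : E, (x ^ q) ^ q ^ 2 = x := by
    intro x
    rw [← pow_mul, ← pow_succ']
    rw [← hE]; exact FiniteField.pow_card x
  have h3E : (3 : E) ≠ 0 := by
    intro h
    have hp3 : p ∣ 3 := by
      have := (CharP.cast_eq_zero_iff E p 3).mp (by exact_mod_cast h)
      exact this
    have : p = 3 := (Nat.prime_dvd_prime_iff_eq pp (by norm_num)).mp hp3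
    exact h3 (by rw [← hqpk, this]; exact dvd_pow_self 3 (by omega))
  have h3F : (3 : F) ≠ 0 := by
    intro h
    apply h3E
    have := congrArg A h
    rw [map_zero] at this
    rw [← this, map_ofNat]
  have hAinj : Function.Injective A := (algebraMap F E).injective
  have hAne : ∀ c : F, c ≠ 0 → A c ≠ 0 := by
    intro c hc h; exact hc (hAinj (by rw [h, map_zero]))
  -- the trace map as an additive hom
  set T : E →+ E :=
    { toFun := fun x => x + x ^ q + (x ^ q) ^ q
      map_zero' := by simp [zero_pow (show q ≠ 0 by omega)]
      map_add' := by
        intro x y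
        show (x + y) + (x + y) ^ q + ((x + y) ^ q) ^ q =
          (x + x ^ q + (x ^ q) ^ q) + (y + y ^ q + (y ^ q) ^ q)
        rw [hadd x y, hadd (x^q) (y^q)]; ring } with hT
  -- kernel has at least q^2 elements
  have hker : q ^ 2 ≤ Nat.card T.ker := by
    have h1 : Nat.card E = Nat.card (E ⧸ T.ker) * Nat.card T.ker :=
      AddSubgroup.card_eq_card_quotient_mul_card_addSubgroup T.ker
    have h2 : Nat.card (E ⧸ T.ker) = Nat.card T.range :=
      Nat.card_congr (QuotientAddGroup.quotientKerEquivRange T).toEquiv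
    have hrangele : Nat.card T.range ≤ q := by
      have hsub : (T.range : Set E) ⊆ {y : E | y ^ q = y} := by
        rintro y ⟨x, rfl⟩
        show (x + x ^ q + (x ^ q) ^ q) ^ q = x + x ^ q + (x ^ q) ^ q
        rw [hadd, hadd]
        have h4 : ((x ^ q) ^ q) ^ q = x := by
          rw [← pow_mul, ← pow_two]
          exact hcube x
        rw [h4]; ring
      have hfne : (X ^ q - X : E[X]) ≠ 0 := by
        intro h
        have := congrArg (fun f => Polynomial.coeff f q) h
        simp only [coeff_sub, coeff_X_pow, if_pos rfl, coeff_X, coeff_zero] at this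
        rw [if_neg (show ¬ (1 = q) by omega)] at this
        norm_num at this
      have hle : ({y : E | y ^ q = y}).ncard ≤ q := by
        have := aux_ncard_root_le (X ^ q - X : E[X]) hfne {y : E | y ^ q = y} (by
          intro x hx
          simp only [Set.mem_setOf_eq] at hx
          simp [IsRoot, hx])
        refine this.trans ?_
        refine (natDegree_sub_le _ _).trans ?_
        simp only [natDegree_X_pow, natDegree_X]
        omega
      calc Nat.card T.range = ((T.range : Set E)).ncard := by
            rw [← Nat.card_coe_set_eq]; rfl
        _ ≤ ({y : E | y ^ q = y}).ncard := Set.ncard_le_ncard hsub (Set.toFinite _)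
        _ ≤ q := hle
    have hq3 : q ^ 3 = Nat.card (E ⧸ T.ker) * Nat.card T.ker := by
      rw [← h1, Nat.card_eq_fintype_card, hE]
    have hkpos : 0 < Nat.card T.ker := Nat.card_pos
    have hle : q * q ^ 2 ≤ q * Nat.card T.ker := by
      calc q * q ^ 2 = q ^ 3 := by ring
        _ = Nat.card (E ⧸ T.ker) * Nat.card T.ker := hq3
        _ ≤ q * Nat.card T.ker := Nat.mul_le_mul_right _ (h2 ▸ hrangele)
    exact Nat.le_of_mul_le_mul_left hle (by omega)
  -- the bad sets
  set B : Set E := {x : E | (x ^ (q - 1)) ^ 3 = 1} with hB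
  set Fs : Set E := {x : E | x ^ (q - 1) = 1} with hFsdef
  have hFsB : Fs ⊆ B := by
    intro x hx
    simp only [hB, hFsdef, Set.mem_setOf_eq] at *
    rw [hx]; norm_num
  have hBcard : B.ncard ≤ (q - 1) * 3 := by
    have hfne : (X ^ ((q - 1) * 3) - C 1 : E[X]) ≠ 0 :=
      X_pow_sub_C_ne_zero (by omega) 1
    have := aux_ncard_root_le (X ^ ((q - 1) * 3) - C 1 : E[X]) hfne B (by
      intro x hx
      simp only [hB, Set.mem_setOf_eq] at hx
      simp only [IsRoot, eval_sub, eval_pow, eval_X, eval_C]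
      rw [pow_mul, hx, sub_self])
    refine this.trans ?_
    rw [natDegree_X_pow_sub_C]
  have hFscard : q - 1 ≤ Fs.ncard := by
    have himg : A '' {y : F | y ≠ 0} ⊆ Fs := by
      rintro _ ⟨y, hy, rfl⟩
      simp only [hFsdef, Set.mem_setOf_eq]
      rw [← map_pow]
      have : y ^ (q - 1) = 1 := by
        rw [← hF]; exact FiniteField.pow_card_sub_one_eq_one y hy
      rw [this, map_one]
    have h1 : ({y : F | y ≠ 0}).ncard = q - 1 := by
      have he : {y : F | y ≠ 0} = ({0} : Set F)ᶜ := by ext y; simp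
      have huniv : ({0} : Set F).ncard + (({0} : Set F)ᶜ).ncard = q := by
        rw [Set.ncard_add_ncard_compl, Nat.card_eq_fintype_card, hF]
      have h0 : ({0} : Set F).ncard = 1 := Set.ncard_singleton 0
      rw [he]; omega
    calc q - 1 = ({y : F | y ≠ 0}).ncard := h1.symm
      _ = (A '' {y : F | y ≠ 0}).ncard := (Set.ncard_image_of_injective _ hAinj).symm
      _ ≤ Fs.ncard := Set.ncard_le_ncard himg (Set.toFinite _)
  -- find a good α
  have hgood : ∃ α : E, α ∈ (T.ker : Set E) ∧ α ≠ 0 ∧ α ∉ B \ Fs := by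
    set bad : Set E := {0} ∪ (B \ Fs) with hbaddef
    have hbadcard : bad.ncard ≤ 1 + 2 * (q - 1) := by
      refine (Set.ncard_union_le _ _).trans ?_
      have h1 : ({0} : Set E).ncard = 1 := Set.ncard_singleton 0
      have h2 : (B \ Fs).ncard = B.ncard - Fs.ncard := Set.ncard_diff hFsB (Set.toFinite _)
      omega
    have hsplit : (T.ker : Set E).ncard ≤ ((T.ker : Set E) \ bad).ncard + bad.ncard := by
      refine le_trans (Set.ncard_le_ncard ?_ (Set.toFinite _)) (Set.ncard_union_le _ _)
      intro x hx
      by_cases h : x ∈ bad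
      · exact Or.inr h
      · exact Or.inl ⟨hx, h⟩
    have hkerset : q ^ 2 ≤ (T.ker : Set E).ncard := by
      rw [← Nat.card_coe_set_eq]
      exact hker
    have hqq : 2 * q ≤ q ^ 2 := by nlinarith
    have hpos : ((T.ker : Set E) \ bad).ncard ≠ 0 := by omega
    obtain ⟨α, hα⟩ := Set.nonempty_of_ncard_ne_zero hpos
    obtain ⟨hα1, hα2⟩ := hα
    refine ⟨α, hα1, ?_, ?_⟩
    · intro h; exact hα2 (Or.inl (by simp [h]))
    · intro h; exact hα2 (Or.inr h)
  obtain ⟨α, hαker, hα0, hαB⟩ := hgood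
  have htr : α + α ^ q + (α ^ q) ^ q = 0 := hαker
  -- α is not in Fs
  have hαFs : α ^ (q - 1) ≠ 1 := by
    intro h
    have hfix : α ^ q = α := by
      have h5 : α ^ q = α ^ (q - 1) * α := by
        rw [← pow_succ]; congr 1; omega
      rw [h5, h, one_mul]
    have h6 : (3 : E) * α = 0 := by
      rw [show (3:E) * α = α + α ^ q + (α ^ q) ^ q by rw [hfix, hfix]; ring]
      exact htr
    rcases mul_eq_zero.mp h6 with h' | h'
    · exact h3E h'
    · exact hα0 h'
  have hαB3 : (α ^ (q - 1)) ^ 3 ≠ 1 := by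
    intro h
    exact hαB ⟨h, hαFs⟩
  have hfix_ne : α ^ q ≠ α := fun h => hαFs (mul_right_cancel₀ hα0 (by
    rw [← pow_succ, show q - 1 + 1 = q by omega, h, one_mul]))
  -- linear independence of ![1, α, α^q]
  have hli : LinearIndependent F ![(1 : E), α, α ^ q] := by
    rw [Fintype.linearIndependent_iff]
    intro g hg
    rw [Fin.sum_univ_three] at hg
    simp only [Matrix.cons_val_zero, Matrix.cons_val_one, Matrix.head_cons,
      Matrix.cons_val_two, Matrix.tail_cons, Algebra.smul_def, mul_one] at hg
    rw [← hA] at hg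
    -- hg : A (g 0) + A (g 1) * α + A (g 2) * α^q = 0
    have hg2 : g 2 = 0 := by
      by_contra hc2
      have hc2E : A (g 2) ≠ 0 := hAne _ hc2
      set lF : F := -(g 1) / g 2 with hlF
      set mF : F := -(g 0) / g 2 with hmF
      have heq : α ^ q = A lF * α + A mF := by
        rw [hlF, hmF, map_div₀, map_div₀, map_neg, map_neg]
        rw [div_mul_eq_mul_div, ← add_div, eq_div_iff hc2E]
        linear_combination hg
      have hl : (A lF) ^ q = A lF := hmapF lF
      have hm : (A mF) ^ q = A mF := hmapF mF
      have he2 : (α ^ q) ^ q = A lF * (A lF * α + A mF) + A mF := by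
        calc (α ^ q) ^ q = (A lF * α + A mF) ^ q := by rw [heq]
          _ = (A lF) ^ q * α ^ q + (A mF) ^ q := by rw [hadd, mul_pow]
          _ = A lF * (A lF * α + A mF) + A mF := by rw [hl, hm, heq]
      have htr' : (1 + A lF + A lF * A lF) * α + (2 + A lF) * A mF = 0 := by
        rw [he2, heq] at htr
        linear_combination htr
      by_cases hs : 1 + lF + lF * lF = 0
      · have h2l : (2 : F) + lF ≠ 0 := by
          intro h
          have hl2 : lF = -2 := by linear_combination h
          rw [hl2] at hs
          norm_num at hs
          exact h3F (by linear_combination hs)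
        have hsE : (1 : E) + A lF + A lF * A lF = 0 := by
          have := congrArg A hs
          rw [map_zero] at this
          rw [← this]
          simp [map_add, map_mul, map_one]
        have hm0 : A mF = 0 := by
          rw [hsE, zero_mul, zero_add] at htr'
          rcases mul_eq_zero.mp htr' with h' | h'
          · exfalso
            apply hAne _ h2l
            rw [map_add, map_ofNat] at *
            exact h'
          · exact h'
        have hlcube : lF ^ 3 = 1 := by linear_combination (lF - 1) * hs
        have hαq : α ^ q = A lF * α := by rw [heq, hm0, add_zero]
        have hend : (α ^ (q - 1)) ^ 3 = 1 := by
          have hpow : α ^ (q - 1) * α = A lF * α := by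
            rw [← pow_succ, show q - 1 + 1 = q by omega, hαq]
          have h1 : α ^ (q - 1) = A lF := mul_right_cancel₀ hα0 hpow
          rw [h1, ← map_pow, hlcube, map_one]
        exact absurd hend hαB3
      · have hsE : A (1 + lF + lF * lF) ≠ 0 := hAne _ hs
        have hα : α = A (-((2 + lF) * mF) / (1 + lF + lF * lF)) := by
          rw [map_div₀, map_neg, eq_div_iff hsE]
          rw [map_add, map_add, map_mul, map_mul, map_one, map_add, map_ofNat]
          linear_combination htr'
        exact hfix_ne (by rw [hα, hmapF])
    have hg1 : g 1 = 0 := by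
      by_contra hc1
      have hc1E : A (g 1) ≠ 0 := hAne _ hc1
      have hα : α = A (-(g 0) / g 1) := by
        rw [map_div₀, map_neg, eq_div_iff hc1E]
        rw [hg2, map_zero, zero_mul, add_zero] at hg
        linear_combination hg
      exact hfix_ne (by rw [hα, hmapF])
    have hg0 : g 0 = 0 := by
      rw [hg2, hg1, map_zero, zero_mul, zero_mul, add_zero, add_zero] at hg
      exact hAinj (by rw [hg, map_zero])
    intro i
    fin_cases i <;> assumption
  have hrank : Module.finrank F E = 3 := by
    have hc := Module.card_eq_pow_finrank (K := F) (V := E)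
    rw [hF, hE] at hc
    exact (Nat.pow_right_injective hq2 hc.symm)
  have hcard3 : Fintype.card (Fin 3) = Module.finrank F E := by simp [hrank]
  refine ⟨α, hα0, ?_, basisOfLinearIndependentOfCardEqFinrank hli hcard3, ?_, ?_, ?_⟩
  · rw [show q ^ 2 = q * q by ring, pow_mul]; exact htr
  · simp [coe_basisOfLinearIndependentOfCardEqFinrank]
  · simp [coe_basisOfLinearIndependentOfCardEqFinrank]
  · simp [coe_basisOfLinearIndependentOfCardEqFinrank]
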